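/- (PPT criterion) If a density matrix ρ on ℂ^n ⊗ ℂ^m is separable, i.e. ρ = Σ_λ p_λ ρ_λ ⊗ σ_λ with p_λ ≥ 0 and each ρ_λ, σ_λ positive semidefinite, then the partial transpose (id ⊗ T)ρ, obtained by transposing the second tensor factor on each block, is positive semidefinite. -/

import Mathlib

open scoped Kronecker ComplexOrder
open Matrix

/-- The partial transpose `(id ⊗ T)` on matrices acting on `ℂ^n ⊗ ℂ^m`:
`((id⊗T)ρ)_{(i,k),(j,l)} = ρ_{(i,l),(j,k)}`. -/
def partialTranspose {n m : ℕ}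
    (ρ : Matrix (Fin n × Fin m) (Fin n × Fin m) ℂ) :
    Matrix (Fin n × Fin m) (Fin n × Fin m) ℂ :=
  Matrix.of fun x y => ρ (x.1, y.2) (y.1, x.2)

lemma kronecker_posSemidef {n m : ℕ} {A : Matrix (Fin n) (Fin n) ℂ}
    {B : Matrix (Fin m) (Fin m) ℂ} (hA : A.PosSemidef) (hB : B.PosSemidef) :
    (A ⊗ₖ B).PosSemidef := by
  exact hA.kronecker hB

lemma smul_posSemidef {N : Type*} [Fintype N] {M : Matrix N N ℂ}
    (hM : M.PosSemidef) {r : ℝ} (hr : 0 ≤ r) : ((r : ℂ) • M).PosSemidef := by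
  rw [posSemidef_iff_dotProduct_mulVec]
  constructor
  · unfold Matrix.IsHermitian
    rw [Matrix.conjTranspose_smul, hM.1.eq]
    congr 1
    simp
  · intro x
    rw [Matrix.smul_mulVec, dotProduct_smul]
    exact smul_nonneg (by exact_mod_cast hr) (hM.dotProduct_mulVec_nonneg x)

/-- PPT criterion: a separable density matrix has positive semidefinite
partial transpose. -/
theorem ppt_criterion {n m k : ℕ}
    (ρ : Matrix (Fin n × Fin m) (Fin n × Fin m) ℂ)
    (p : Fin k → ℝ)
    (ρs : Fin k → Matrix (Fin n) (Fin n) ℂ)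
    (σs : Fin k → Matrix (Fin m) (Fin m) ℂ)
    (hp : ∀ l, 0 ≤ p l)
    (hρs : ∀ l, (ρs l).PosSemidef) (hσs : ∀ l, (σs l).PosSemidef)
    (hsep : ρ = ∑ l, (p l : ℂ) • (ρs l ⊗ₖ σs l)) :
    (partialTranspose ρ).PosSemidef := by
  have key : partialTranspose ρ = ∑ l, (p l : ℂ) • (ρs l ⊗ₖ (σs l)ᵀ) := by
    ext x y
    simp [partialTranspose, hsep, Matrix.sum_apply, Matrix.transpose_apply]
  rw [key]
  refine Finset.sum_induction _ _ (fun a b ha hb => ha.add hb) Matrix.PosSemidef.zero ?_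
  intro l _
  exact smul_posSemidef (kronecker_posSemidef (hρs l) (hσs l).transpose) (hp l)
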